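/- Let η ≥ 1 be a countable ordinal. Then the set D_η ⊆ 2^ω is D_η(Σ^0_2)-complete; in particular, D_η belongs to D_η(Σ^0_2)(2^ω) but not to Ď_η(Σ^0_2)(2^ω). -/

import Mathlib

open Set Function

abbrev Cantor : Type := ℕ → Bool
abbrev Baire : Type := ℕ → ℕ

abbrev SetClass : Type 1 := (Z : Type) → TopologicalSpace Z → Set Z → Prop

/-- `S` is a Borel subset of `Z`. -/
def IsBorel {Z : Type} [TopologicalSpace Z] (S : Set Z) : Prop :=
  @MeasurableSet Z (borel Z) S

/-- the inverse `A⁻¹` of a relation. -/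
def relInv {X : Type} (A : Set (X × X)) : Set (X × X) := {p | (p.2, p.1) ∈ A}

/-- the symmetrization `s(A) = A ∪ A⁻¹` of a relation. -/
def symmRel {X : Type} (A : Set (X × X)) : Set (X × X) := A ∪ relInv A

def IsIrreflRel {X : Type} (A : Set (X × X)) : Prop := ∀ x : X, (x, x) ∉ A

def IsAntisymmRel {X : Type} (A : Set (X × X)) : Prop :=
  ∀ x y : X, (x, y) ∈ A → (y, x) ∈ A → x = y

/-- an oriented graph is an irreflexive antisymmetric relation. -/
def IsOrientedGraph {X : Type} (A : Set (X × X)) : Prop := IsIrreflRel A ∧ IsAntisymmRel A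

/-- a relation is acyclic if there is no injective sequence `(x_i)_{i ≤ n}` with `n ≥ 2`,
`(x_i, x_{i+1}) ∈ A` for `i < n` and `(x_n, x_0) ∈ A`. -/
def AcyclicRel {X : Type} (A : Set (X × X)) : Prop :=
  ¬ ∃ (n : ℕ) (x : ℕ → X), 2 ≤ n ∧ (∀ i j, i ≤ n → j ≤ n → x i = x j → i = j) ∧
      (∀ i, i < n → (x i, x (i + 1)) ∈ A) ∧ (x n, x 0) ∈ A

/-- `A` is s-acyclic if `s(A)` is acyclic. -/
def SAcyclic {X : Type} (A : Set (X × X)) : Prop := AcyclicRel (symmRel A)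

/-- a set is locally countable if all of its vertical and horizontal sections are countable. -/
def LocallyCountable {X Y : Type} (A : Set (X × Y)) : Prop :=
  (∀ x : X, {y : Y | (x, y) ∈ A}.Countable) ∧ (∀ y : Y, {x : X | (x, y) ∈ A}.Countable)

/-- a space is zero-dimensional if it has a neighborhood basis of clopen sets. -/
def ZeroDimensional (Z : Type) [TopologicalSpace Z] : Prop :=
  ∀ x : Z, ∀ U ∈ nhds x, ∃ V : Set Z, IsClopen V ∧ x ∈ V ∧ V ⊆ U

/-- `B ⊆ X × Y` is potentially in the class `Γ`: there are finer Polish topologies on `X` and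
on `Y` for which `B` belongs to `Γ` computed in the corresponding product space. -/
def Potentially (Γ : SetClass) {X Y : Type} [tX : TopologicalSpace X] [tY : TopologicalSpace Y]
    (B : Set (X × Y)) : Prop :=
  ∃ (σ : TopologicalSpace X) (τ : TopologicalSpace Y),
    σ ≤ tX ∧ τ ≤ tY ∧ @PolishSpace X σ ∧ @PolishSpace Y τ ∧
      Γ (X × Y) (@instTopologicalSpaceProd X Y σ τ) B

/-- `A` is separable from `B` by a `pot(Γ)` set. -/
def SepPot (Γ : SetClass) {X Y : Type} [TopologicalSpace X] [TopologicalSpace Y]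
    (A B : Set (X × Y)) : Prop :=
  ∃ S : Set (X × Y), Potentially Γ S ∧ A ⊆ S ∧ Disjoint S B

def openClass : SetClass := fun Z t S => @IsOpen Z t S

def closedClass : SetClass := fun Z t S => @IsClosed Z t S

/-- the class `Σ^0_2` of countable unions of closed sets. -/
def sigma02Class : SetClass := fun Z t S =>
  ∃ F : ℕ → Set Z, (∀ n, @IsClosed Z t (F n)) ∧ S = ⋃ n, F n

/-- the class `Π^0_2` of countable intersections of open sets. -/
def pi02Class : SetClass := fun Z t S =>
  ∃ U : ℕ → Set Z, (∀ n, @IsOpen Z t (U n)) ∧ S = ⋂ n, U n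

/-- the class `Δ^0_2 = Σ^0_2 ∩ Π^0_2`. -/
def delta02Class : SetClass := fun Z t S => sigma02Class Z t S ∧ pi02Class Z t S

/-- the dual class `Ď` of complements of sets in `Γ`. -/
def dualClass (Γ : SetClass) : SetClass := fun Z t S => Γ Z t Sᶜ

def interClass (Γ Γ' : SetClass) : SetClass := fun Z t S => Γ Z t S ∧ Γ' Z t S

/-- standard parity of an ordinal: the parity of its finite part. -/
def OrdEven (o : Ordinal.{0}) : Prop := Even (o % Ordinal.omega0)

/-- the difference set `D((O_θ)_{θ<η})`. -/
def DiffSet {Z : Type} (η : Ordinal.{0}) (O : Ordinal.{0} → Set Z) : Set Z :=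
  {x | ∃ θ, θ < η ∧ (OrdEven θ ↔ ¬ OrdEven η) ∧ x ∈ O θ ∧ ∀ θ', θ' < θ → x ∉ O θ'}

/-- the class `D_η(Γ)` of `η`-differences of increasing sequences of sets in `Γ`. -/
def DClass (η : Ordinal.{0}) (Γ : SetClass) : SetClass := fun Z t S =>
  ∃ O : Ordinal.{0} → Set Z, (∀ θ, θ < η → Γ Z t (O θ)) ∧
    (∀ θ₁ θ₂, θ₁ ≤ θ₂ → θ₂ < η → O θ₁ ⊆ O θ₂) ∧ S = DiffSet η O

/-- choice between a relation and its inverse. -/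
def cSel {X : Type} (b : Bool) (C : Set (X × X)) : Set (X × X) :=
  if b then C else relInv C

/-- quasi-acyclicity of a relation on a Polish space. -/
def QuasiAcyclic {X : Type} [TopologicalSpace X] (A : Set (X × X)) : Prop :=
  ∃ C : ℕ → Set (X × X),
    (∀ n, Potentially closedClass (C n)) ∧
    (∀ m n, m ≠ n → Disjoint (C m) (C n)) ∧
    (⋃ n, C n) = A ∧
    ∀ z₀ z₁ z₂ : X, (z₀, z₁) ∈ symmRel A → (z₁, z₂) ∈ symmRel A → z₀ ≠ z₂ →
      ∀ (k : ℕ) (nn : ℕ → ℕ) (ε : ℕ → Bool) (x y : ℕ → X), 1 ≤ k →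
        (∀ i, 1 ≤ i → i ≤ k →
          x i ≠ z₀ ∧ x i ≠ z₁ ∧ x i ≠ z₂ ∧ y i ≠ z₀ ∧ y i ≠ z₁ ∧ y i ≠ z₂) →
        (z₀, x 1) ∈ cSel (ε 1) (C (nn 1)) →
        (z₂, y 1) ∈ cSel (ε 1) (C (nn 1)) →
        (∀ i, 2 ≤ i → i ≤ k →
          (x (i - 1), x i) ∈ cSel (ε i) (C (nn i)) ∧
          (y (i - 1), y i) ∈ cSel (ε i) (C (nn i))) →
        x k ≠ y k

/-- `(X, Y, A, B) ⊑ (X', Y', A', B')` : reduction by a pair of injective continuous maps. -/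
def Reducible {X Y X' Y' : Type} [TopologicalSpace X] [TopologicalSpace Y]
    [TopologicalSpace X'] [TopologicalSpace Y']
    (A B : Set (X × Y)) (A' B' : Set (X' × Y')) : Prop :=
  ∃ (f : X → X') (g : Y → Y'), Continuous f ∧ Continuous g ∧
    Function.Injective f ∧ Function.Injective g ∧
    (∀ p ∈ A, (f p.1, g p.2) ∈ A') ∧ (∀ p ∈ B, (f p.1, g p.2) ∈ B')

/-- reduction via a square map `f × f`. -/
def SqReducible {X X' : Type} [TopologicalSpace X] [TopologicalSpace X']
    (A B : Set (X × X)) (A' B' : Set (X' × X')) : Prop :=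
  ∃ f : X → X', Continuous f ∧ Function.Injective f ∧
    (∀ p ∈ A, (f p.1, f p.2) ∈ A') ∧ (∀ p ∈ B, (f p.1, f p.2) ∈ B')

/-- a set is `K_σ` if it is a countable union of compact sets. -/
def IsKSigma {Z : Type} [TopologicalSpace Z] (S : Set Z) : Prop :=
  ∃ K : ℕ → Set Z, (∀ n, IsCompact (K n)) ∧ S = ⋃ n, K n

/-- Wadge classes of Borel sets. -/
def IsWadgeClassOfBorel (Γ : SetClass) : Prop :=
  ∃ A : Set Baire, IsBorel A ∧
    ∀ (Z : Type) [tZ : TopologicalSpace Z], PolishSpace Z → ZeroDimensional Z →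
      ∀ S : Set Z, (Γ Z tZ S ↔ ∃ f : Z → Baire, Continuous f ∧ S = f ⁻¹' A)

/-- the Borel classes `Σ^0_ξ`, `ξ ≥ 1`. -/
inductive IsSigma0 : Ordinal.{0} → (Z : Type) → TopologicalSpace Z → Set Z → Prop
  | base (Z : Type) (t : TopologicalSpace Z) (S : Set Z) :
      @IsOpen Z t S → IsSigma0 1 Z t S
  | iUnion (Z : Type) (t : TopologicalSpace Z) (ξ : Ordinal.{0}) (o : ℕ → Ordinal.{0})
      (f : ℕ → Set Z) : 1 < ξ → (∀ n, (1 : Ordinal.{0}) ≤ o n) → (∀ n, o n < ξ) →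
      (∀ n, IsSigma0 (o n) Z t (f n)ᶜ) → IsSigma0 ξ Z t (⋃ n, f n)

/-- the family of classes `D_η(Σ^0_1)`, `Ď_η(Σ^0_1)` (`1 ≤ η < ω₁`), `D_n(Σ^0_2)`,
`Ď_n(Σ^0_2)` (`1 ≤ n < ω`) and `Δ^0_2`. -/
def GammaFamily (Γ : SetClass) : Prop :=
  (∃ η : Ordinal.{0}, 1 ≤ η ∧ η.card ≤ Cardinal.aleph0 ∧ Γ = DClass η openClass) ∨
  (∃ η : Ordinal.{0}, 1 ≤ η ∧ η.card ≤ Cardinal.aleph0 ∧ Γ = dualClass (DClass η openClass)) ∨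
  (∃ n : ℕ, 1 ≤ n ∧ Γ = DClass (n : Ordinal.{0}) sigma02Class) ∨
  (∃ n : ℕ, 1 ≤ n ∧ Γ = dualClass (DClass (n : Ordinal.{0}) sigma02Class)) ∨
  Γ = delta02Class

/-- specification of the map `φ_η : ω^{<ω} → {-1} ∪ (η+1)`, where `none` codes `-1`. -/
def PhiSpec (η : Ordinal.{0}) (φ : List ℕ → Option Ordinal.{0}) : Prop :=
  φ [] = some η ∧
  (∀ s o, φ s = some o → o ≤ η) ∧
  (∀ s n, φ s = none → φ (s ++ [n]) = none) ∧
  (∀ s n, φ s = some 0 → φ (s ++ [n]) = none) ∧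
  (∀ s θ n, φ s = some (θ + 1) → φ (s ++ [n]) = some θ) ∧
  (∀ s o, φ s = some o → Order.IsSuccLimit o →
    ∃ θf : ℕ → Ordinal.{0}, (∀ n, φ (s ++ [n]) = some (θf n)) ∧ StrictMono θf ∧
      (∀ n, ¬ OrdEven (θf n)) ∧ ∀ β, β < o → ∃ n, β ≤ θf n)

/-- the prime coding `I(s) = p_0^{s(0)+1} ⋯ p_{|s|-1}^{s(|s|-1)+1}`, `I(∅) = 0`. -/
noncomputable def Ifun (s : List ℕ) : ℕ :=
  if s = [] then 0
  else ∏ i ∈ Finset.range s.length, (Nat.nth Nat.Prime i) ^ (s.getD i 0 + 1)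

/-- the bijection `⟨·⟩_η : T_η → ω`, increasing with respect to `I`. -/
noncomputable def cEnum (φ : List ℕ → Option Ordinal.{0}) (s : List ℕ) : ℕ :=
  Nat.card {t : List ℕ // φ t ≠ none ∧ Ifun t < Ifun s}

/-- the length-lexicographic enumeration `∅, 0, 1, 00, 01, 10, 11, …` of `2^{<ω}`. -/
def lexEnum (n : ℕ) : List Bool := ((n + 1).bits).dropLast.reverse

/-- the map `ψ` enumerating `∅, ∅, 0, 0, 1, 1, 00, 00, 01, 01, …`. -/
def psiFun (q : ℕ) : List Bool := lexEnum (q / 2)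

noncomputable def tAux (φ : List ℕ → Option Ordinal.{0}) (ε : Bool) : List ℕ → List Bool
  | [] => []
  | q :: r =>
      tAux φ ε r ++ psiFun q ++
        List.replicate
          (cEnum φ (r.reverse ++ [q]) - cEnum φ r.reverse - (psiFun q).length - 1) false ++
        [ε]

/-- the sequences `t^ε_s` for `s ∈ T_η`. -/
noncomputable def tSeq (φ : List ℕ → Option Ordinal.{0}) (ε : Bool) (s : List ℕ) : List Bool :=
  tAux φ ε s.reverse

/-- the concatenation `u ⌢ γ ∈ 2^ω` of a finite sequence with an infinite one. -/
def appendSeq (u : List Bool) (γ : Cantor) : Cantor :=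
  fun n => if n < u.length then u.getD n false else γ (n - u.length)

/-- the sets `ℕ^η_ε = {(t^0_s ⌢ γ, t^1_s ⌢ γ) | s ∈ T_η, parity(|s|) = ε}`,
where `ε = false` codes `0` and `ε = true` codes `1`. -/
noncomputable def NNset (φ : List ℕ → Option Ordinal.{0}) (ε : Bool) : Set (Cantor × Cantor) :=
  {p | ∃ (s : List ℕ) (γ : Cantor), φ s ≠ none ∧ (Even s.length ↔ ε = false) ∧
      p.1 = appendSeq (tSeq φ false s) γ ∧ p.2 = appendSeq (tSeq φ true s) γ}

/-- the sets `𝕊^η_ε = {(t^0_s ⌢ γ, t^1_s ⌢ γ) | s ∈ T_η \ {∅},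
parity(|s|) = 1 - |parity(s(0)) - ε|}`. -/
noncomputable def SSset (φ : List ℕ → Option Ordinal.{0}) (ε : Bool) : Set (Cantor × Cantor) :=
  {p | ∃ (s : List ℕ) (γ : Cantor), φ s ≠ none ∧ s ≠ [] ∧
      ((¬ Even s.length) ↔ (Even (s.headD 0) ↔ ε = false)) ∧
      p.1 = appendSeq (tSeq φ false s) γ ∧ p.2 = appendSeq (tSeq φ true s) γ}

/-- prepending a digit to an element of the Cantor space. -/
def consSeq (b : Bool) (α : Cantor) : Cantor := fun n => if n = 0 then b else α (n - 1)

/-- the relation `{(0⌢α, 1⌢β) | (α, β) ∈ A}`. -/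
def prep01 (A : Set (Cantor × Cantor)) : Set (Cantor × Cantor) :=
  {p | ∃ q ∈ A, p.1 = consSeq false q.1 ∧ p.2 = consSeq true q.2}

/-- the sets `𝔹^η_ε = {(0⌢α, 1⌢β) | (α, β) ∈ ℕ^η_ε}`. -/
noncomputable def BBset (φ : List ℕ → Option Ordinal.{0}) (ε : Bool) : Set (Cantor × Cantor) :=
  prep01 (NNset φ ε)

/-- the sets `ℂ^η_ε = {(0⌢α, 1⌢β) | (α, β) ∈ 𝕊^η_ε}`. -/
noncomputable def CCset (φ : List ℕ → Option Ordinal.{0}) (ε : Bool) : Set (Cantor × Cantor) :=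
  prep01 (SSset φ ε)

/-- the initial segment `α | l` of `α ∈ 2^ω`. -/
def listInit (α : Cantor) (l : ℕ) : List Bool := (List.range l).map α

/-- frames, generating trees on `2 × 2`. -/
def IsFrame (F : ℕ → List Bool × List Bool) : Prop :=
  (∀ l : ℕ, (F l).1.length = l ∧ (F l).2.length = l) ∧
  (∀ p q : ℕ, ∀ w : List Bool, ∃ N : ℕ,
      (∃ l : ℕ, F l =
        ((F q).1 ++ false :: (w ++ List.replicate N false),
         (F q).2 ++ true :: (w ++ List.replicate N false))) ∧
      (((F q).1.length + 1 + w.length + N) - 1).unpair.1 = p) ∧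
  (∀ l : ℕ, 0 < l → ∃ q : ℕ, q < l ∧ ∃ w : List Bool,
      (F l).1 = (F q).1 ++ false :: w ∧ (F l).2 = (F q).2 ++ true :: w)

/-- the tree on `2 × 2` generated by a frame. -/
def frameTree (F : ℕ → List Bool × List Bool) : Set (List Bool × List Bool) :=
  {p | p.1.length = p.2.length ∧
      (p.1 = [] ∨ ∃ (q : ℕ) (w : List Bool),
        p.1 = (F q).1 ++ false :: w ∧ p.2 = (F q).2 ++ true :: w)}

/-- the body `⌈T⌉` of a tree on `2 × 2`. -/
def treeBody (T : Set (List Bool × List Bool)) : Set (Cantor × Cantor) :=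
  {p | ∀ l : ℕ, (listInit p.1 l, listInit p.2 l) ∈ T}

/-- the equivalence relation `𝔼_0` of eventual agreement. -/
def E0rel : Set (Cantor × Cantor) := {p | ∃ m : ℕ, ∀ n, m < n → p.1 n = p.2 n}

/-- the sets `𝔼^ε_0`. -/
def E0par (ε : ℕ) : Set (Cantor × Cantor) :=
  {p | ∃ m : ℕ, 0 < m ∧ p.1 m ≠ p.2 m ∧ (∀ n, m < n → p.1 n = p.2 n) ∧
      (m - 1).unpair.1 % 2 = ε}

/-- the shift map `S : 2^ω → 2^ω`. -/
def shiftSeq (α : Cantor) : Cantor := fun m => α (m + 1)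

/-- the symmetric difference of two elements of `2^ω`. -/
def xorSeq (α β : Cantor) : Cantor := fun m => xor (α m) (β m)

/-- the set `C_0` of eventually null sequences. -/
def Czero : Set Cantor := {α | ∃ m : ℕ, ∀ p, m ≤ p → α p = false}

/-- the sets `C_θ` built from a surjection `S` onto `η`. -/
def CTheta (S : ℕ → Ordinal.{0}) : Ordinal.{0} → Set Cantor := fun θ =>
  if θ = 0 then Czero
  else {α | ∃ m : ℕ, (∀ p : ℕ, α (Nat.pair m p) = false) ∧ S (Nat.unpair m).1 ≤ θ}

/-- the set `D_η = D((C_θ)_{θ<η})`. -/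
def DEtaSet (η : Ordinal.{0}) (S : ℕ → Ordinal.{0}) : Set Cantor := DiffSet η (CTheta S)

/-- the set `ℕ_n = {(α, β) ∈ ⌈T⌉ | S(α Δ β) ∉ D_n}`. -/
def NDn (F : ℕ → List Bool × List Bool) (n : ℕ) (Sn : ℕ → ℕ) : Set (Cantor × Cantor) :=
  {p | p ∈ treeBody (frameTree F) ∧
      shiftSeq (xorSeq p.1 p.2) ∉ DEtaSet (n : Ordinal.{0}) (fun m => (Sn m : Ordinal.{0}))}



-- cylinder over a point
lemma isClopen_cylPt (x : Cantor) (n : ℕ) : IsClopen {y : Cantor | ∀ i < n, y i = x i} := by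
  have : {y : Cantor | ∀ i < n, y i = x i} = ⋂ i ∈ Finset.range n, (fun y : Cantor => y i) ⁻¹' {x i} := by
    ext y; simp [Finset.mem_range]
  rw [this]
  exact isClopen_biInter_finset fun i _ =>
    (isClopen_discrete {x i}).preimage (continuous_apply i)

lemma cyl_subset_of_open {U : Set Cantor} (hU : IsOpen U) {x : Cantor} (hx : x ∈ U) :
    ∃ n, {y : Cantor | ∀ i < n, y i = x i} ⊆ U := by
  obtain ⟨I, u, hI, hIu⟩ := isOpen_pi_iff.1 hU x hx
  classical
  refine ⟨(I.sup id) + 1, fun y hy => hIu ?_⟩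
  intro i hi
  have : y i = x i := hy i (Nat.lt_succ_of_le (Finset.le_sup (f := id) hi))
  rw [this]; exact (hI i hi).2

lemma zeroDimensional_cantor : ZeroDimensional Cantor := by
  intro x U hU
  obtain ⟨V, hVU, hV, hxV⟩ := mem_nhds_iff.1 hU
  obtain ⟨n, hn⟩ := cyl_subset_of_open hV hxV
  exact ⟨_, isClopen_cylPt x n, fun i _ => rfl, hn.trans hVU⟩

-- open sets in zero-dim second ctble are ctble unions of clopens
lemma open_eq_iUnion_clopen {Z : Type} [TopologicalSpace Z] [SecondCountableTopology Z]
    (hzd : ZeroDimensional Z) {U : Set Z} (hU : IsOpen U) :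
    ∃ W : ℕ → Set Z, (∀ n, IsClopen (W n)) ∧ U = ⋃ n, W n := by
  classical
  have h : ∀ x : U, ∃ V : Set Z, IsClopen V ∧ (x : Z) ∈ V ∧ V ⊆ U := fun x =>
    hzd x U (hU.mem_nhds x.2)
  choose V hV1 hV2 hV3 using h
  obtain ⟨T, hTc, hTU⟩ := TopologicalSpace.isOpen_iUnion_countable V (fun x => (hV1 x).2)
  rcases T.eq_empty_or_nonempty with hT | hT
  · refine ⟨fun _ => ∅, fun _ => isClopen_empty, ?_⟩
    have : U = ∅ := by
      rcases eq_empty_or_nonempty U with h | ⟨x, hx⟩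
      · exact h
      · exfalso
        have : (x : Z) ∈ ⋃ i, V i := mem_iUnion.2 ⟨⟨x, hx⟩, hV2 ⟨x, hx⟩⟩
        rw [← hTU, hT] at this; simp at this
    simp [this]
  · obtain ⟨g, hg⟩ := hTc.exists_eq_range hT
    refine ⟨fun n => V (g n), fun n => hV1 _, ?_⟩
    apply Subset.antisymm
    · intro x hx
      have : (x : Z) ∈ ⋃ i ∈ T, V i := by
        rw [hTU]; exact mem_iUnion.2 ⟨⟨x, hx⟩, hV2 ⟨x, hx⟩⟩
      rw [hg] at this
      simpa using this
    · exact iUnion_subset fun n => hV3 (g n)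

-- closed sets are decreasing intersections of clopens
lemma closed_eq_iInter_clopen {Z : Type} [TopologicalSpace Z] [SecondCountableTopology Z]
    (hzd : ZeroDimensional Z) {F : Set Z} (hF : IsClosed F) :
    ∃ V : ℕ → Set Z, (∀ p, IsClopen (V p)) ∧ (∀ p q, p ≤ q → V q ⊆ V p) ∧ F = ⋂ p, V p := by
  obtain ⟨W, hW, hWU⟩ := open_eq_iUnion_clopen hzd hF.isOpen_compl
  refine ⟨fun p => ⋂ k ∈ Finset.range (p+1), (W k)ᶜ, fun p =>
    isClopen_biInter_finset fun k _ => (hW k).compl, ?_, ?_⟩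
  · intro p q hpq
    intro x hx
    simp only [mem_iInter, Finset.mem_range] at hx ⊢
    intro k hk
    exact hx k (by omega)
  · have : Fᶜ = ⋃ n, W n := hWU
    ext x
    simp only [mem_iInter, Finset.mem_range]
    constructor
    · intro hx p k _
      intro hxk
      have : x ∈ Fᶜ := by rw [this]; exact mem_iUnion.2 ⟨k, hxk⟩
      exact this hx
    · intro hx
      by_contra hxF
      have : x ∈ ⋃ n, W n := by rw [← this]; exact hxF
      obtain ⟨k, hk⟩ := mem_iUnion.1 this
      exact (hx k k (Nat.lt_succ_self k)) hk
open Classical in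
/-- least `n` with `z ∈ V n l`, capped at `l+1`. -/
noncomputable def nzF {Z : Type} (V : ℕ → ℕ → Set Z) (z : Z) (l : ℕ) : ℕ :=
  sInf ({n | z ∈ V n l} ∪ {l + 1})

open Classical in
/-- number of changes of `nzF` below `p`. -/
noncomputable def czF {Z : Type} (V : ℕ → ℕ → Set Z) (z : Z) (p : ℕ) : ℕ :=
  ((Finset.range p).filter (fun l => nzF V z (l + 1) ≠ nzF V z l)).card

variable {Z : Type} {V : ℕ → ℕ → Set Z}

lemma nzF_le_succ (z : Z) (l : ℕ) : nzF V z l ≤ l + 1 :=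
  Nat.sInf_le (by simp)

lemma nzF_spec (z : Z) (l : ℕ) : z ∈ V (nzF V z l) l ∨ nzF V z l = l + 1 := by
  have : nzF V z l ∈ {n | z ∈ V n l} ∪ {l + 1} := Nat.sInf_mem (⟨l+1, by simp⟩)
  rcases this with h | h
  · exact Or.inl h
  · exact Or.inr h

lemma nzF_le_of_mem {z : Z} {n l : ℕ} (h : z ∈ V n l) : nzF V z l ≤ n :=
  Nat.sInf_le (Or.inl h)

section props
variable (hmono : ∀ n m p, n ≤ m → V n p ⊆ V m p)
    (hanti : ∀ n p q, p ≤ q → V n q ⊆ V n p)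

include hmono hanti in
lemma nzF_le_iff {z : Z} {l k : ℕ} : nzF V z l ≤ k ↔ (l + 1 ≤ k ∨ z ∈ V k l) := by
  constructor
  · intro h
    by_cases hk : l + 1 ≤ k
    · exact Or.inl hk
    · right
      rcases nzF_spec (V := V) z l with hm | he
      · exact hmono _ _ _ h hm
      · omega
  · rintro (h | h)
    · exact (nzF_le_succ z l).trans h
    · exact nzF_le_of_mem h

include hmono hanti in
lemma nzF_mono (z : Z) : Monotone (nzF V z) := by
  apply monotone_nat_of_le_succ
  intro l
  rcases nzF_spec (V := V) z (l+1) with hm | he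
  · exact nzF_le_of_mem (hanti _ _ _ (Nat.le_succ l) hm)
  · calc nzF V z l ≤ l + 1 := nzF_le_succ z l
      _ ≤ l + 2 := by omega
      _ = nzF V z (l+1) := he.symm

include hmono hanti in
lemma nzF_bounded_iff {z : Z} :
    (z ∈ ⋃ n, ⋂ p, V n p) ↔ ∃ B, ∀ l, nzF V z l ≤ B := by
  constructor
  · rintro h
    obtain ⟨n, hn⟩ := mem_iUnion.1 h
    rw [mem_iInter] at hn
    exact ⟨n + 1, fun l => (nzF_le_of_mem (hn l)).trans (by omega)⟩
  · rintro ⟨B, hB⟩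
    refine mem_iUnion.2 ⟨B, mem_iInter.2 fun p => ?_⟩
    have h1 : z ∈ V B (p + B) := by
      have := (nzF_le_iff hmono hanti (z := z) (l := p + B) (k := B)).1 (hB (p + B))
      rcases this with h | h
      · omega
      · exact h
    exact hanti _ _ _ (by omega) h1

lemma czF_le (z : Z) (p : ℕ) : czF V z p ≤ p :=
  (Finset.card_filter_le _ _).trans (by simp)

open Classical in
lemma czF_succ (z : Z) (p : ℕ) :
    czF V z (p+1) = czF V z p + (if nzF V z (p+1) ≠ nzF V z p then 1 else 0) := by
  classical
  by_cases h : nzF V z (p + 1) ≠ nzF V z p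
  · simp [czF, Finset.range_add_one, Finset.filter_insert, h]
  · simp [czF, Finset.range_add_one, Finset.filter_insert, h]

lemma czF_mono (z : Z) : Monotone (czF V z) := by
  apply monotone_nat_of_le_succ
  intro p
  rw [czF_succ]
  omega

include hmono hanti in
lemma czF_le_nzF (z : Z) (p : ℕ) : czF V z p ≤ nzF V z p := by
  induction p with
  | zero => simp [czF]
  | succ p ih =>
    rw [czF_succ]
    by_cases h : nzF V z (p+1) ≠ nzF V z p
    · rw [if_pos h]
      have h2 : nzF V z p ≤ nzF V z (p+1) := nzF_mono hmono hanti z (Nat.le_succ p)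
      omega
    · rw [if_neg h]
      push_neg at h
      rw [h]
      omega

include hmono hanti in
lemma czF_unbounded {z : Z} (h : z ∉ ⋃ n, ⋂ p, V n p) :
    ∀ m p₀, ∃ p, p₀ ≤ p ∧ nzF V z (p+1) ≠ nzF V z p ∧ m ≤ czF V z p := by
  have hub : ∀ B, ∃ l, B < nzF V z l := by
    intro B
    by_contra hc
    push_neg at hc
    exact h ((nzF_bounded_iff hmono hanti).2 ⟨B, hc⟩)
  -- changes are infinite
  have hch : ∀ q, ∃ p, q ≤ p ∧ nzF V z (p+1) ≠ nzF V z p := by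
    intro q
    by_contra hc
    push_neg at hc
    have hconst : ∀ p, q ≤ p → nzF V z p = nzF V z q := by
      intro p hp
      induction p with
      | zero =>
        have : q = 0 := by omega
        rw [this]
      | succ p ih =>
        rcases Nat.lt_or_ge q (p+1) with h1 | h1
        · have h2 := hc p (by omega)
          rw [h2, ih (by omega)]
        · have : q = p + 1 := by omega
          rw [this]
    obtain ⟨l, hl⟩ := hub (nzF V z q + nzF V z q + 1)
    rcases Nat.lt_or_ge l q with h1 | h1
    · have := nzF_mono hmono hanti z (le_of_lt h1)
      omega
    · rw [hconst l h1] at hl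
      omega
  -- cz is unbounded
  have hcz : ∀ m, ∃ p₁, ∀ p, p₁ ≤ p → m ≤ czF V z p := by
    intro m
    induction m with
    | zero => exact ⟨0, fun p _ => Nat.zero_le _⟩
    | succ m ih =>
      obtain ⟨p₁, hp₁⟩ := ih
      obtain ⟨p, hp, hne⟩ := hch p₁
      refine ⟨p + 1, fun q hq => ?_⟩
      have h1 : m + 1 ≤ czF V z (p+1) := by
        rw [czF_succ, if_pos hne]
        have := hp₁ p hp
        omega
      exact h1.trans (czF_mono z hq)
  intro m p₀
  obtain ⟨p₁, hp₁⟩ := hcz m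
  obtain ⟨p, hp, hne⟩ := hch (max p₀ p₁)
  exact ⟨p, le_trans (le_max_left _ _) hp, hne, hp₁ p (le_trans (le_max_right _ _) hp)⟩

include hmono hanti in
lemma czF_tail_of_mem {z : Z} (h : z ∈ ⋃ n, ⋂ p, V n p) :
    ∃ B L, (∀ p, czF V z p ≤ B) ∧ ∀ p, L ≤ p → nzF V z (p+1) = nzF V z p := by
  obtain ⟨B, hB⟩ := (nzF_bounded_iff hmono hanti).1 h
  have hcz : ∀ p, czF V z p ≤ B := fun p => (czF_le_nzF hmono hanti z p).trans (hB p)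
  suffices hfin : ∃ L, ∀ p, L ≤ p → nzF V z (p+1) = nzF V z p by
    obtain ⟨L, hL⟩ := hfin
    exact ⟨B, L, hcz, hL⟩
  by_contra hc
  push_neg at hc
  -- build B+1 changes by induction
  have key : ∀ k, ∃ p, k ≤ czF V z p := by
    intro k
    induction k with
    | zero => exact ⟨0, Nat.zero_le _⟩
    | succ k ih =>
      obtain ⟨p, hp⟩ := ih
      obtain ⟨q, hq, hne⟩ := hc p
      refine ⟨q + 1, ?_⟩
      rw [czF_succ, if_pos hne]
      have := czF_mono (V := V) z hq
      omega
  obtain ⟨p, hp⟩ := key (B+1)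
  have := hcz p
  omega

end props

variable {Z : Type} [TopologicalSpace Z] {V : ℕ → ℕ → Set Z}

section clopen
variable (hV : ∀ n p, IsClopen (V n p))
    (hmono : ∀ n m p, n ≤ m → V n p ⊆ V m p)
    (hanti : ∀ n p q, p ≤ q → V n q ⊆ V n p)

include hV hmono hanti in
lemma isClopen_nzF_le (l k : ℕ) : IsClopen {z : Z | nzF V z l ≤ k} := by
  have : {z : Z | nzF V z l ≤ k} = if l + 1 ≤ k then univ else V k l := by
    ext z
    rw [mem_setOf_eq, nzF_le_iff hmono hanti]
    split <;> simp_all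
  rw [this]
  split
  · exact isClopen_univ
  · exact hV k l

include hV hmono hanti in
lemma isClopen_nzF_eq (l k : ℕ) : IsClopen {z : Z | nzF V z l = k} := by
  rcases k with _ | k
  · have : {z : Z | nzF V z l = 0} = {z : Z | nzF V z l ≤ 0} := by
      ext z; simp [Nat.le_zero]
    rw [this]; exact isClopen_nzF_le hV hmono hanti l 0
  · have : {z : Z | nzF V z l = k + 1} =
        {z : Z | nzF V z l ≤ k + 1} ∩ {z : Z | nzF V z l ≤ k}ᶜ := by
      ext z; simp only [mem_inter_iff, mem_setOf_eq, mem_compl_iff]; omega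
    rw [this]
    exact ((isClopen_nzF_le hV hmono hanti l (k+1)).inter
      (isClopen_nzF_le hV hmono hanti l k).compl)

include hV hmono hanti in
lemma isClopen_chF (p : ℕ) : IsClopen {z : Z | nzF V z (p+1) ≠ nzF V z p} := by
  have : {z : Z | nzF V z (p+1) ≠ nzF V z p} =
      (⋃ k ∈ Finset.range (p+3),
        ({z : Z | nzF V z (p+1) = k} ∩ {z : Z | nzF V z p = k}))ᶜ := by
    ext z
    simp only [mem_compl_iff, mem_iUnion, mem_inter_iff, mem_setOf_eq, Finset.mem_range,
      exists_prop, not_exists, not_and]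
    constructor
    · intro h k _ h1 h2
      exact h (h1.trans h2.symm)
    · intro h he
      have h1 := nzF_le_succ (V := V) z (p+1)
      exact h (nzF V z (p+1)) (by omega) rfl he.symm
  rw [this]
  refine (isClopen_biUnion_finset fun k _ => ?_).compl
  exact (isClopen_nzF_eq hV hmono hanti (p+1) k).inter (isClopen_nzF_eq hV hmono hanti p k)

include hV hmono hanti in
lemma isClopen_czF_eq (p c : ℕ) : IsClopen {z : Z | czF V z p = c} := by
  induction p generalizing c with
  | zero =>
    rcases c with _ | c
    · have : {z : Z | czF V z 0 = 0} = univ := by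
        ext z; simp [czF]
      rw [this]; exact isClopen_univ
    · have : {z : Z | czF V z 0 = c + 1} = ∅ := by
        ext z; simp [czF]
      rw [this]; exact isClopen_empty
  | succ p ih =>
    classical
    rcases c with _ | c
    · have : {z : Z | czF V z (p+1) = 0} =
          {z : Z | nzF V z (p+1) ≠ nzF V z p}ᶜ ∩ {z : Z | czF V z p = 0} := by
        ext z
        simp only [mem_inter_iff, mem_compl_iff, mem_setOf_eq, czF_succ]
        by_cases h : nzF V z (p+1) ≠ nzF V z p <;> simp [h]
      rw [this]
      exact ((isClopen_chF hV hmono hanti p).compl).inter (ih 0)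
    · have : {z : Z | czF V z (p+1) = c + 1} =
          ({z : Z | nzF V z (p+1) ≠ nzF V z p} ∩ {z : Z | czF V z p = c}) ∪
          ({z : Z | nzF V z (p+1) ≠ nzF V z p}ᶜ ∩ {z : Z | czF V z p = c + 1}) := by
        ext z
        simp only [mem_union, mem_inter_iff, mem_compl_iff, mem_setOf_eq, czF_succ]
        by_cases h : nzF V z (p+1) ≠ nzF V z p <;> simp [h]
      rw [this]
      exact ((isClopen_chF hV hmono hanti p).inter (ih c)).union
        ((isClopen_chF hV hmono hanti p).compl.inter (ih (c+1)))

include hV hmono hanti in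
lemma isClopen_czF_ge (p m : ℕ) : IsClopen {z : Z | m ≤ czF V z p} := by
  have : {z : Z | m ≤ czF V z p} = ⋃ c ∈ Finset.Icc m p, {z : Z | czF V z p = c} := by
    ext z
    simp only [mem_iUnion, mem_setOf_eq, Finset.mem_Icc, exists_prop]
    constructor
    · intro h
      exact ⟨czF V z p, ⟨h, czF_le z p⟩, rfl⟩
    · rintro ⟨c, ⟨h1, _⟩, h2⟩
      omega
  rw [this]
  exact isClopen_biUnion_finset fun c _ => isClopen_czF_eq hV hmono hanti p c

end clopen

set_option maxHeartbeats 1000000 in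
lemma reduction_lemma (η : Ordinal.{0}) (hη : 1 ≤ η) (Sη : ℕ → Ordinal.{0})
    (hS1 : ∀ m, Sη m < η) (hS2 : ∀ θ, θ < η → ∃ m, Sη m = θ)
    (Z : Type) [tZ : TopologicalSpace Z] (hPol : PolishSpace Z) (hzd : ZeroDimensional Z)
    (O : Ordinal.{0} → Set Z) (hSig : ∀ θ, θ < η → sigma02Class Z tZ (O θ))
    (hmonoO : ∀ θ₁ θ₂, θ₁ ≤ θ₂ → θ₂ < η → O θ₁ ⊆ O θ₂) :
    ∃ f : Z → Cantor, Continuous f ∧ ∀ z θ, θ < η → (f z ∈ CTheta Sη θ ↔ z ∈ O θ) := by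
  classical
  haveI : SecondCountableTopology Z := hPol.toSecondCountableTopology
  have hη0 : (0 : Ordinal.{0}) < η := lt_of_lt_of_le zero_lt_one hη
  -- closed decompositions
  have hF : ∀ θ : Ordinal.{0}, ∃ F : ℕ → Set Z,
      (∀ n, IsClosed (F n)) ∧ (θ < η → O θ = ⋃ n, F n) := by
    intro θ
    by_cases h : θ < η
    · obtain ⟨F, h1, h2⟩ := hSig θ h
      exact ⟨F, h1, fun _ => h2⟩
    · exact ⟨fun _ => ∅, fun _ => isClosed_empty, fun h' => absurd h' h⟩
  choose F hFcl hFO using hF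
  -- clopen approximations
  have hVex : ∀ (θ : Ordinal.{0}) (n : ℕ), ∃ V : ℕ → Set Z,
      (∀ p, IsClopen (V p)) ∧ (∀ p q, p ≤ q → V q ⊆ V p) ∧ F θ n = ⋂ p, V p :=
    fun θ n => closed_eq_iInter_clopen hzd (hFcl θ n)
  choose Vc hVcl hVanti hVF using hVex
  -- monotonized family for θ = 0
  set V0 : ℕ → ℕ → Set Z := fun n p => ⋃ k ∈ Finset.range (n+1), Vc 0 k p with hV0def
  have hV0cl : ∀ n p, IsClopen (V0 n p) :=
    fun n p => isClopen_biUnion_finset fun k _ => hVcl 0 k p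
  have hV0mono : ∀ n m p, n ≤ m → V0 n p ⊆ V0 m p := by
    intro n m p hnm z hz
    simp only [hV0def, mem_iUnion, Finset.mem_range, exists_prop] at hz ⊢
    obtain ⟨k, hk, hzk⟩ := hz
    exact ⟨k, by omega, hzk⟩
  have hV0anti : ∀ n p q, p ≤ q → V0 n q ⊆ V0 n p := by
    intro n p q hpq z hz
    simp only [hV0def, mem_iUnion, Finset.mem_range, exists_prop] at hz ⊢
    obtain ⟨k, hk, hzk⟩ := hz
    exact ⟨k, hk, hVanti 0 k p q hpq hzk⟩
  -- the union of the intersections of the monotonized family is O 0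
  have hO0 : O 0 = ⋃ n, ⋂ p, V0 n p := by
    apply Subset.antisymm
    · intro z hz
      rw [hFO 0 hη0] at hz
      obtain ⟨n, hn⟩ := mem_iUnion.1 hz
      refine mem_iUnion.2 ⟨n, mem_iInter.2 fun p => ?_⟩
      have : z ∈ Vc 0 n p := by
        have := (hVF 0 n) ▸ hn
        exact mem_iInter.1 this p
      simp only [hV0def, mem_iUnion, Finset.mem_range, exists_prop]
      exact ⟨n, by omega, this⟩
    · intro z hz
      obtain ⟨n, hn⟩ := mem_iUnion.1 hz
      rw [mem_iInter] at hn
      -- pigeonhole: some k ≤ n has z ∈ Vc 0 k p for infinitely many p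
      have hcover : (Set.univ : Set ℕ) ⊆ ⋃ k ∈ Finset.range (n+1), {p | z ∈ Vc 0 k p} := by
        intro p _
        have := hn p
        simp only [hV0def, mem_iUnion, Finset.mem_range, exists_prop] at this
        obtain ⟨k, hk, hzk⟩ := this
        simp only [mem_iUnion, Finset.mem_range, exists_prop, mem_setOf_eq]
        exact ⟨k, hk, hzk⟩
      have hinf : ∃ k, k < n + 1 ∧ {p | z ∈ Vc 0 k p}.Infinite := by
        by_contra hfin
        push_neg at hfin
        have : (⋃ k ∈ Finset.range (n+1), {p | z ∈ Vc 0 k p}).Finite := by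
          apply Set.Finite.biUnion (Finset.finite_toSet _)
          intro k hk
          have := hfin k (Finset.mem_range.1 hk)
          exact this
        exact Set.infinite_univ (this.subset hcover)
      obtain ⟨k, hk, hkinf⟩ := hinf
      have hall : ∀ p, z ∈ Vc 0 k p := by
        intro p
        obtain ⟨q, hq, hpq⟩ := hkinf.exists_gt p
        exact hVanti 0 k p q (le_of_lt hpq) hq
      have : z ∈ F 0 k := by
        rw [hVF 0 k]
        exact mem_iInter.2 hall
      rw [hFO 0 hη0]
      exact mem_iUnion.2 ⟨k, this⟩
  -- the bit sets
  set bitSet : ℕ → Set Z := fun l =>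
    (Vc (Sη l.unpair.1.unpair.1) l.unpair.1.unpair.2 l.unpair.2)ᶜ ∩
      ({z | nzF V0 z (l.unpair.2 + 1) ≠ nzF V0 z l.unpair.2} ∩
        {z | l.unpair.1 ≤ czF V0 z l.unpair.2}) with hbitdef
  have hbitclopen : ∀ l, IsClopen (bitSet l) := by
    intro l
    exact ((hVcl _ _ _).compl).inter ((isClopen_chF hV0cl hV0mono hV0anti _).inter
      (isClopen_czF_ge hV0cl hV0mono hV0anti _ _))
  set f : Z → Cantor := fun z l => (bitSet l).boolIndicator z with hfdef
  have hfcont : Continuous f := by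
    apply continuous_pi
    intro l
    exact (continuous_boolIndicator_iff_isClopen (bitSet l)).2 (hbitclopen l)
  have hftrue : ∀ z l, f z l = true ↔ z ∈ bitSet l := by
    intro z l
    exact (Set.mem_iff_boolIndicator _ _).symm
  have hffalse : ∀ z l, f z l = false ↔ z ∉ bitSet l := by
    intro z l
    exact (Set.notMem_iff_boolIndicator _ _).symm
  -- column lemmas
  have hColZ : ∀ z m, z ∈ F (Sη m.unpair.1) m.unpair.2 → ∀ p, f z (Nat.pair m p) = false := by
    intro z m hz p
    rw [hffalse]
    have hv : z ∈ Vc (Sη m.unpair.1) m.unpair.2 p := by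
      have := (hVF (Sη m.unpair.1) m.unpair.2) ▸ hz
      exact mem_iInter.1 this p
    simp only [hbitdef, Nat.unpair_pair, mem_inter_iff, mem_compl_iff, mem_setOf_eq]
    intro h
    exact absurd hv h.1
  have hColNZ : ∀ z m, z ∉ O 0 → z ∉ F (Sη m.unpair.1) m.unpair.2 →
      ∃ p, f z (Nat.pair m p) = true := by
    intro z m hz0 hzF
    have hz0' : z ∉ ⋃ n, ⋂ p, V0 n p := by rwa [← hO0]
    have hv : ∃ p₁, z ∉ Vc (Sη m.unpair.1) m.unpair.2 p₁ := by
      by_contra hc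
      push_neg at hc
      exact hzF ((hVF _ _) ▸ mem_iInter.2 hc)
    obtain ⟨p₁, hp₁⟩ := hv
    obtain ⟨p, hpge, hch, hcz⟩ := czF_unbounded hV0mono hV0anti hz0' m p₁
    refine ⟨p, ?_⟩
    rw [hftrue]
    simp only [hbitdef, Nat.unpair_pair, mem_inter_iff, mem_compl_iff, mem_setOf_eq]
    exact ⟨fun h => hp₁ (hVanti _ _ _ _ hpge h), hch, hcz⟩
  refine ⟨f, hfcont, ?_⟩
  intro z θ hθ
  by_cases hθ0 : θ = 0
  · subst hθ0
    rw [CTheta, if_pos rfl]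
    constructor
    · -- f z eventually null → z ∈ O 0
      intro hfz
      by_contra hzO
      obtain ⟨mm, hmm⟩ := hfz
      obtain ⟨m₀, hm₀⟩ := hS2 0 hη0
      have hzF : z ∉ F (Sη (Nat.pair m₀ mm).unpair.1) (Nat.pair m₀ mm).unpair.2 := by
        rw [Nat.unpair_pair]
        simp only [hm₀]
        intro h
        apply hzO
        rw [hFO 0 hη0]
        exact mem_iUnion.2 ⟨mm, h⟩
      obtain ⟨p, hp⟩ := hColNZ z (Nat.pair m₀ mm) hzO hzF
      have hge : mm ≤ Nat.pair (Nat.pair m₀ mm) p :=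
        le_trans (Nat.right_le_pair m₀ mm) (Nat.left_le_pair _ p)
      have := hmm _ hge
      rw [hp] at this
      exact Bool.noConfusion this
    · -- z ∈ O 0 → f z eventually null
      intro hz
      have hz' : z ∈ ⋃ n, ⋂ p, V0 n p := by rwa [← hO0]
      obtain ⟨B, L, hB, hL⟩ := czF_tail_of_mem hV0mono hV0anti hz'
      refine ⟨(B + L) * (B + L) + (B + L) + 1, fun l hl => ?_⟩
      rw [hffalse]
      simp only [hbitdef, mem_inter_iff, mem_compl_iff, mem_setOf_eq]
      rintro ⟨-, hch, hcz⟩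
      have hp : l.unpair.2 < L := by
        by_contra hc
        push_neg at hc
        exact hch (hL _ hc)
      have hm : l.unpair.1 ≤ B := le_trans hcz (hB _)
      have hlb : l ≤ (B + L) * (B + L) + (B + L) := by
        have h1 : Nat.pair l.unpair.1 l.unpair.2 = l := Nat.pair_unpair l
        have h2 : Nat.pair l.unpair.1 l.unpair.2 ≤
            (l.unpair.1 + l.unpair.2) * (l.unpair.1 + l.unpair.2) +
              (l.unpair.1 + l.unpair.2) := by
          rw [Nat.pair]; split <;> nlinarith
        have h3 : l.unpair.1 + l.unpair.2 ≤ B + L := by omega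
        nlinarith [h1, h2, h3]
      omega
  · rw [CTheta, if_neg hθ0]
    constructor
    · rintro ⟨m, hcol, hle⟩
      by_contra hzO
      have hθ'η : Sη m.unpair.1 < η := hS1 m.unpair.1
      have hzO' : z ∉ O (Sη m.unpair.1) := fun h => hzO (hmonoO _ θ hle hθ h)
      have hzF : z ∉ F (Sη m.unpair.1) m.unpair.2 := by
        intro h
        apply hzO'
        rw [hFO _ hθ'η]
        exact mem_iUnion.2 ⟨m.unpair.2, h⟩
      have hz0 : z ∉ O 0 := fun h => hzO' (hmonoO 0 _ zero_le hθ'η h)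
      obtain ⟨p, hp⟩ := hColNZ z m hz0 hzF
      have := hcol p
      rw [hp] at this
      exact Bool.noConfusion this
    · intro hz
      obtain ⟨m₀, hm₀⟩ := hS2 θ hθ
      rw [hFO θ hθ] at hz
      obtain ⟨n, hn⟩ := mem_iUnion.1 hz
      refine ⟨Nat.pair m₀ n, ?_, ?_⟩
      · intro p
        apply hColZ
        rw [Nat.unpair_pair]
        simpa only [hm₀] using hn
      · rw [Nat.unpair_pair]
        simp only [hm₀]
        exact le_refl θ

lemma mem_DiffSet_iff_of_pointwise {X Y : Type} (η : Ordinal.{0})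
    (O : Ordinal.{0} → Set X) (C : Ordinal.{0} → Set Y) (x : X) (y : Y)
    (h : ∀ θ, θ < η → (x ∈ O θ ↔ y ∈ C θ)) :
    x ∈ DiffSet η O ↔ y ∈ DiffSet η C := by
  constructor
  · rintro ⟨θ, hθ, hpar, hm, hnot⟩
    exact ⟨θ, hθ, hpar, (h θ hθ).1 hm,
      fun θ' hθ' hc => hnot θ' hθ' ((h θ' (lt_trans hθ' hθ)).2 hc)⟩
  · rintro ⟨θ, hθ, hpar, hm, hnot⟩
    exact ⟨θ, hθ, hpar, (h θ hθ).2 hm,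
      fun θ' hθ' hc => hnot θ' hθ' ((h θ' (lt_trans hθ' hθ)).1 hc)⟩

lemma part1_lemma (η : Ordinal.{0}) (hη : 1 ≤ η) (Sη : ℕ → Ordinal.{0})
    (hS2 : ∀ θ, θ < η → ∃ m, Sη m = θ) :
    DClass η sigma02Class Cantor inferInstance (DEtaSet η Sη) := by
  have hη0 : (0 : Ordinal.{0}) < η := lt_of_lt_of_le zero_lt_one hη
  refine ⟨CTheta Sη, ?_, ?_, rfl⟩
  · intro θ hθ
    by_cases h0 : θ = 0
    · subst h0
      rw [CTheta, if_pos rfl]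
      refine ⟨fun m => {α : Cantor | ∀ p, m ≤ p → α p = false}, ?_, ?_⟩
      · intro m
        show IsClosed {α : Cantor | ∀ p, m ≤ p → α p = false}
        have : {α : Cantor | ∀ p, m ≤ p → α p = false} =
            ⋂ p, {α : Cantor | m ≤ p → α p = false} := by
          ext α; simp
        rw [this]
        refine isClosed_iInter fun p => ?_
        by_cases h : m ≤ p
        · have : {α : Cantor | m ≤ p → α p = false} = (fun α : Cantor => α p) ⁻¹' {false} := by
            ext α; simp [h]
          rw [this]
          exact (isClosed_discrete _).preimage (continuous_apply p)
        · have : {α : Cantor | m ≤ p → α p = false} = univ := by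
            ext α; simp [h]
          rw [this]
          exact isClosed_univ
      · ext α; simp [Czero]
    · rw [CTheta, if_neg h0]
      refine ⟨fun m => if Sη m.unpair.1 ≤ θ then
          {α : Cantor | ∀ p, α (Nat.pair m p) = false} else ∅, ?_, ?_⟩
      · intro m
        show IsClosed (if Sη (Nat.unpair m).1 ≤ θ then
          {α : Cantor | ∀ p, α (Nat.pair m p) = false} else ∅)
        split
        · have : {α : Cantor | ∀ p, α (Nat.pair m p) = false} =
              ⋂ p, (fun α : Cantor => α (Nat.pair m p)) ⁻¹' {false} := by
            ext α; simp
          rw [this]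
          exact isClosed_iInter fun p =>
            (isClosed_discrete _).preimage (continuous_apply _)
        · exact isClosed_empty
      · ext α
        simp only [mem_iUnion, mem_setOf_eq]
        constructor
        · rintro ⟨m, h1, h2⟩
          exact ⟨m, by rw [if_pos h2]; exact h1⟩
        · rintro ⟨m, hm⟩
          by_cases h : Sη m.unpair.1 ≤ θ
          · rw [if_pos h] at hm
            exact ⟨m, hm, h⟩
          · rw [if_neg h] at hm
            exact absurd hm (notMem_empty α)
  · intro θ₁ θ₂ h12 h2 α hα
    by_cases h10 : θ₁ = 0
    · subst h10
      by_cases h20 : θ₂ = 0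
      · subst h20; exact hα
      · rw [CTheta, if_pos rfl] at hα
        rw [CTheta, if_neg h20]
        obtain ⟨M, hM⟩ := hα
        obtain ⟨m₀, hm₀⟩ := hS2 0 hη0
        refine ⟨Nat.pair m₀ M, fun p => hM _ ?_, ?_⟩
        · exact le_trans (Nat.right_le_pair m₀ M) (Nat.left_le_pair _ p)
        · rw [Nat.unpair_pair, hm₀]
          exact zero_le
    · have h20 : θ₂ ≠ 0 := by
        intro h
        subst h
        exact h10 (nonpos_iff_eq_zero.1 h12)
      rw [CTheta, if_neg h10] at hα
      rw [CTheta, if_neg h20]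
      obtain ⟨m, hm1, hm2⟩ := hα
      exact ⟨m, hm1, hm2.trans h12⟩

section part3

lemma sigma02_preimage {Y W : Type} [tY : TopologicalSpace Y] [tW : TopologicalSpace W]
    {g : W → Y} (hg : Continuous g) {S : Set Y} (h : sigma02Class Y tY S) :
    sigma02Class W tW (g ⁻¹' S) := by
  obtain ⟨F, h1, h2⟩ := h
  exact ⟨fun n => g ⁻¹' F n, fun n => (h1 n).preimage hg, by rw [h2, preimage_iUnion]⟩

lemma DClass_preimage (η : Ordinal.{0}) {Y W : Type} [tY : TopologicalSpace Y]
    [tW : TopologicalSpace W] {g : W → Y} (hg : Continuous g) {S : Set Y}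
    (h : DClass η sigma02Class Y tY S) : DClass η sigma02Class W tW (g ⁻¹' S) := by
  obtain ⟨O, h1, h2, h3⟩ := h
  refine ⟨fun θ => g ⁻¹' O θ, fun θ hθ => sigma02_preimage hg (h1 θ hθ),
    fun θ₁ θ₂ h12 hθ₂ => preimage_mono (h2 θ₁ θ₂ h12 hθ₂), ?_⟩
  rw [h3]
  ext w
  exact mem_DiffSet_iff_of_pointwise η O (fun θ => g ⁻¹' O θ) (g w) w
    (fun θ _ => Iff.rfl) |>.symm.trans Iff.rfl

lemma sigma02_iUnion {Z : Type} {t : TopologicalSpace Z} (G : ℕ → Set Z)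
    (h : ∀ k, sigma02Class Z t (G k)) : sigma02Class Z t (⋃ k, G k) := by
  choose F h1 h2 using h
  refine ⟨fun l => F l.unpair.1 l.unpair.2, fun l => h1 _ _, ?_⟩
  ext x
  simp only [mem_iUnion]
  constructor
  · rintro ⟨k, hk⟩
    rw [h2 k] at hk
    obtain ⟨n, hn⟩ := mem_iUnion.1 hk
    exact ⟨Nat.pair k n, by rwa [Nat.unpair_pair]⟩
  · rintro ⟨l, hl⟩
    exact ⟨l.unpair.1, by rw [h2]; exact mem_iUnion.2 ⟨l.unpair.2, hl⟩⟩

/-- cylinder of a finite binary string -/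
def cylL (s : List Bool) : Set Cantor := {x | ∀ i < s.length, x i = s.getD i false}

lemma isOpen_cylL (s : List Bool) : IsOpen (cylL s) := by
  have : cylL s = ⋂ i ∈ Finset.range s.length, (fun y : Cantor => y i) ⁻¹' {s.getD i false} := by
    ext y; simp [cylL, Finset.mem_range]
  rw [this]
  exact (isClopen_biInter_finset fun i _ =>
    (isClopen_discrete _).preimage (continuous_apply i)).isOpen

lemma cylL_listInit (x : Cantor) (n : ℕ) :
    cylL ((List.range n).map x) = {y : Cantor | ∀ i < n, y i = x i} := by
  ext y
  simp only [cylL, mem_setOf_eq, List.length_map, List.length_range]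
  constructor
  · intro h i hi
    have := h i hi
    rwa [List.getD_eq_getElem _ _ (by simp [hi]), List.getElem_map, List.getElem_range] at this
  · intro h i hi
    rw [List.getD_eq_getElem _ _ (by simp [hi]), List.getElem_map, List.getElem_range]
    exact h i hi

/-- universal closed set -/
def ClosedU : Set (Cantor × Cantor) :=
  {p | ∀ s : List Bool, p.1 (Encodable.encode s) = true → p.2 ∉ cylL s}

lemma isClosed_ClosedU : IsClosed ClosedU := by
  have : ClosedU = ⋂ s : List Bool,
      (((fun p : Cantor × Cantor => p.1 (Encodable.encode s)) ⁻¹' {true}) ∩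
        (Prod.snd ⁻¹' cylL s))ᶜ := by
    ext p
    simp only [ClosedU, mem_setOf_eq, mem_iInter, mem_compl_iff, mem_inter_iff,
      mem_preimage, mem_singleton_iff]
    constructor
    · intro h s hs
      exact h s hs.1 hs.2
    · intro h s h1 h2
      exact h s ⟨h1, h2⟩
  rw [this]
  refine isClosed_iInter fun s => ?_
  refine IsOpen.isClosed_compl ?_
  exact ((isOpen_discrete _).preimage ((continuous_apply _).comp continuous_fst)).inter
    ((isOpen_cylL s).preimage continuous_snd)

open Classical in
lemma ClosedU_universal {C : Set Cantor} (hC : IsClosed C) :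
    ∃ β : Cantor, ∀ x, ((β, x) ∈ ClosedU ↔ x ∈ C) := by
  classical
  refine ⟨fun k => if ∃ s : List Bool, Encodable.encode s = k ∧ Disjoint C (cylL s)
    then true else false, fun x => ?_⟩
  have hβ : ∀ s : List Bool,
      ((fun k => if ∃ s : List Bool, Encodable.encode s = k ∧ Disjoint C (cylL s)
        then true else false) (Encodable.encode s) = true) ↔ Disjoint C (cylL s) := by
    intro s
    show (if ∃ s' : List Bool, Encodable.encode s' = Encodable.encode s ∧ Disjoint C (cylL s')
      then true else false) = true ↔ _
    constructor
    · intro h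
      by_cases hd : ∃ s' : List Bool, Encodable.encode s' = Encodable.encode s ∧
          Disjoint C (cylL s')
      · obtain ⟨s', hs', hd'⟩ := hd
        rwa [Encodable.encode_injective hs'] at hd'
      · rw [if_neg hd] at h
        exact Bool.noConfusion h
    · intro h
      rw [if_pos ⟨s, rfl, h⟩]
  constructor
  · intro h
    by_contra hx
    obtain ⟨n, hn⟩ := cyl_subset_of_open hC.isOpen_compl hx
    have hd : Disjoint C (cylL ((List.range n).map x)) := by
      rw [cylL_listInit]
      rw [Set.disjoint_left]
      intro y hy hy2
      exact hn hy2 hy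
    have hx2 : x ∈ cylL ((List.range n).map x) := by
      rw [cylL_listInit]
      intro i _
      rfl
    exact h _ ((hβ _).2 hd) hx2
  · intro hx s hs hx2
    have hd := (hβ s).1 hs
    exact Set.disjoint_left.1 hd hx hx2

/-- decoding of countably many Cantor elements from one -/
def decC (γ : Cantor) (k : ℕ) : Cantor := fun i => γ (Nat.pair k i)

lemma continuous_decC_prod (k : ℕ) :
    Continuous (fun p : Cantor × Cantor => (decC p.1 k, p.2)) := by
  refine Continuous.prodMk ?_ continuous_snd
  exact continuous_pi fun i => (continuous_apply (Nat.pair k i)).comp continuous_fst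

/-- universal Σ⁰₂ set -/
def SigU : Set (Cantor × Cantor) := {p | ∃ k, (decC p.1 k, p.2) ∈ ClosedU}

lemma sigma02_SigU : sigma02Class (Cantor × Cantor) inferInstance SigU := by
  refine ⟨fun k => (fun p : Cantor × Cantor => (decC p.1 k, p.2)) ⁻¹' ClosedU,
    fun k => isClosed_ClosedU.preimage (continuous_decC_prod k), ?_⟩
  ext p
  simp only [SigU, mem_setOf_eq, mem_iUnion, mem_preimage]

lemma SigU_universal {S : Set Cantor} (hS : sigma02Class Cantor inferInstance S) :
    ∃ γ : Cantor, ∀ x, ((γ, x) ∈ SigU ↔ x ∈ S) := by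
  obtain ⟨F, h1, h2⟩ := hS
  have : ∀ n, ∃ β : Cantor, ∀ x, ((β, x) ∈ ClosedU ↔ x ∈ F n) :=
    fun n => ClosedU_universal (h1 n)
  choose β hβ using this
  refine ⟨fun j => β j.unpair.1 j.unpair.2, fun x => ?_⟩
  have hdec : ∀ k, decC (fun j => β j.unpair.1 j.unpair.2) k = β k := by
    intro k
    funext i
    simp [decC, Nat.unpair_pair]
  constructor
  · rintro ⟨k, hk⟩
    rw [hdec k] at hk
    rw [h2]
    exact mem_iUnion.2 ⟨k, (hβ k x).1 hk⟩
  · intro hx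
    rw [h2] at hx
    obtain ⟨k, hk⟩ := mem_iUnion.1 hx
    exact ⟨k, by rw [hdec k]; exact (hβ k x).2 hk⟩

end part3

/-- sections of the universal `D_η(Σ⁰₂)` set -/
def OUSet (Sη : ℕ → Ordinal.{0}) : Ordinal.{0} → Set (Cantor × Cantor) := fun θ =>
  {p | ∃ k, Sη k ≤ θ ∧ (decC p.1 k, p.2) ∈ SigU}

lemma sigma02_OUSet (Sη : ℕ → Ordinal.{0}) (θ : Ordinal.{0}) :
    sigma02Class (Cantor × Cantor) inferInstance (OUSet Sη θ) := by
  classical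
  have heq : OUSet Sη θ = ⋃ k, (if Sη k ≤ θ then
      (fun p : Cantor × Cantor => (decC p.1 k, p.2)) ⁻¹' SigU else ∅) := by
    ext p
    simp only [OUSet, mem_setOf_eq, mem_iUnion]
    constructor
    · rintro ⟨k, h1, h2⟩
      exact ⟨k, by rw [if_pos h1]; exact h2⟩
    · rintro ⟨k, hk⟩
      by_cases h : Sη k ≤ θ
      · rw [if_pos h] at hk
        exact ⟨k, h, hk⟩
      · rw [if_neg h] at hk
        exact absurd hk (notMem_empty p)
  rw [heq]
  apply sigma02_iUnion
  intro k
  by_cases h : Sη k ≤ θ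
  · rw [if_pos h]
    exact sigma02_preimage (continuous_decC_prod k) sigma02_SigU
  · rw [if_neg h]
    exact ⟨fun _ => ∅, fun _ => isClosed_empty, by simp⟩

lemma OUSet_mono (Sη : ℕ → Ordinal.{0}) {θ₁ θ₂ : Ordinal.{0}} (h : θ₁ ≤ θ₂) :
    OUSet Sη θ₁ ⊆ OUSet Sη θ₂ := by
  rintro p ⟨k, h1, h2⟩
  exact ⟨k, h1.trans h, h2⟩

lemma DU_universal (η : Ordinal.{0}) (Sη : ℕ → Ordinal.{0})
    (hS1 : ∀ m, Sη m < η) (hS2 : ∀ θ, θ < η → ∃ m, Sη m = θ)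
    (S : Set Cantor) (hS : DClass η sigma02Class Cantor inferInstance S) :
    ∃ α : Cantor, ∀ x, ((α, x) ∈ DiffSet η (OUSet Sη) ↔ x ∈ S) := by
  obtain ⟨O, h1, h2, h3⟩ := hS
  have hγ : ∀ k, ∃ γ : Cantor, ∀ x, ((γ, x) ∈ SigU ↔ x ∈ O (Sη k)) :=
    fun k => SigU_universal (h1 _ (hS1 k))
  choose γ hγ using hγ
  refine ⟨fun j => γ j.unpair.1 j.unpair.2, fun x => ?_⟩
  have hdec : ∀ k, decC (fun j => γ j.unpair.1 j.unpair.2) k = γ k := by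
    intro k
    funext i
    simp [decC, Nat.unpair_pair]
  have hpt : ∀ θ, θ < η →
      (((fun j => γ j.unpair.1 j.unpair.2, x) : Cantor × Cantor) ∈ OUSet Sη θ ↔ x ∈ O θ) := by
    intro θ hθ
    constructor
    · rintro ⟨k, hk, hmem⟩
      rw [hdec k] at hmem
      exact h2 (Sη k) θ hk hθ ((hγ k x).1 hmem)
    · intro hx
      obtain ⟨k, hk⟩ := hS2 θ hθ
      refine ⟨k, le_of_eq hk, ?_⟩
      rw [hdec k]
      exact (hγ k x).2 (by rwa [hk])
  rw [h3]
  exact mem_DiffSet_iff_of_pointwise η (OUSet Sη) O _ x hpt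

/-- for `η ≥ 1` countable, the set `D_η ⊆ 2^ω` is `D_η(Σ^0_2)`-complete; in
particular it belongs to `D_η(Σ^0_2)(2^ω)` but not to `Ď_η(Σ^0_2)(2^ω)`. -/
theorem statement18 (η : Ordinal.{0}) (hη : 1 ≤ η) (hcount : η.card ≤ Cardinal.aleph0)
    (Sη : ℕ → Ordinal.{0}) (hS1 : ∀ m, Sη m < η) (hS2 : ∀ θ, θ < η → ∃ m, Sη m = θ) :
    DClass η sigma02Class Cantor inferInstance (DEtaSet η Sη) ∧
    (∀ (Z : Type) [tZ : TopologicalSpace Z], PolishSpace Z → ZeroDimensional Z →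
      ∀ A : Set Z, DClass η sigma02Class Z tZ A →
        ∃ f : Z → Cantor, Continuous f ∧ A = f ⁻¹' (DEtaSet η Sη)) ∧
    ¬ dualClass (DClass η sigma02Class) Cantor inferInstance (DEtaSet η Sη) := by
  have part2 : ∀ (Z : Type) [tZ : TopologicalSpace Z], PolishSpace Z → ZeroDimensional Z →
      ∀ A : Set Z, DClass η sigma02Class Z tZ A →
        ∃ f : Z → Cantor, Continuous f ∧ A = f ⁻¹' (DEtaSet η Sη) := by
    intro Z tZ hPol hzd A hA
    obtain ⟨O, h1, h2, h3⟩ := hA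
    obtain ⟨f, hf, hiff⟩ := reduction_lemma η hη Sη hS1 hS2 Z hPol hzd O h1 h2
    refine ⟨f, hf, ?_⟩
    ext z
    rw [h3]
    show z ∈ DiffSet η O ↔ f z ∈ DEtaSet η Sη
    exact mem_DiffSet_iff_of_pointwise η O (CTheta Sη) z (f z)
      (fun θ hθ => (hiff z θ hθ).symm)
  refine ⟨part1_lemma η hη Sη hS2, part2, ?_⟩
  intro Hdual
  have HdualD : DClass η sigma02Class Cantor inferInstance (DEtaSet η Sη)ᶜ := Hdual
  have hU : DClass η sigma02Class (Cantor × Cantor) inferInstance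
      (DiffSet η (OUSet Sη)) :=
    ⟨OUSet Sη, fun θ _ => sigma02_OUSet Sη θ,
      fun θ₁ θ₂ h12 _ => OUSet_mono Sη h12, rfl⟩
  have hΔ : DClass η sigma02Class Cantor inferInstance
      ((fun α : Cantor => (α, α)) ⁻¹' DiffSet η (OUSet Sη)) :=
    DClass_preimage η (continuous_id.prodMk continuous_id) hU
  obtain ⟨f, hf, hfeq⟩ := part2 Cantor PolishSpace.mk zeroDimensional_cantor _ hΔ
  have hΔc : DClass η sigma02Class Cantor inferInstance
      ((fun α : Cantor => (α, α)) ⁻¹' DiffSet η (OUSet Sη))ᶜ := by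
    have heq : ((fun α : Cantor => (α, α)) ⁻¹' DiffSet η (OUSet Sη))ᶜ =
        f ⁻¹' (DEtaSet η Sη)ᶜ := by
      rw [hfeq, preimage_compl]
    rw [heq]
    exact DClass_preimage η hf HdualD
  obtain ⟨β, hβ⟩ := DU_universal η Sη hS1 hS2 _ hΔc
  have h1 : ((β, β) ∈ DiffSet η (OUSet Sη)) ↔ ¬ ((β, β) ∈ DiffSet η (OUSet Sη)) := hβ β
  exact iff_not_self h1
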